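/- Let V be a finite-dimensional real vector space, σ ⊆ V a polyhedral convex cone (the ℝ_{≥0}-span of a finite set) with σ ∩ (−σ) = {0}, and φ ∈ V* a nonzero linear functional. Then the extreme rays of the cone σ ∩ {x ∈ V : φ(x) ≥ 0} are exactly: (i) the extreme rays of σ contained in {φ ≥ 0}, together with (ii) the rays ℝ_{≥0}(φ(e₂)e₁ − φ(e₁)e₂), where ℝ_{≥0}e₁ and ℝ_{≥0}e₂ are extreme rays of σ with φ(e₁) < 0 < φ(e₂) such that ℝ_{≥0}e₁ + ℝ_{≥0}e₂ is a two-dimensional face of σ. -/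

import Mathlib

open Pointwise

/-- The convex cone generated by a set `s`: all finite nonnegative linear
combinations of elements of `s`. -/
def coneHull {V : Type*} [AddCommGroup V] [Module ℝ V] (s : Set V) : Set V :=
  {x | ∃ (n : ℕ) (c : Fin n → ℝ) (v : Fin n → V),
    (∀ i, 0 ≤ c i) ∧ (∀ i, v i ∈ s) ∧ x = ∑ i, c i • v i}

/-- The ray `ℝ_{≥0}·v`. -/
def rayOf {V : Type*} [AddCommGroup V] [Module ℝ V] (v : V) : Set V :=
  {x | ∃ c : ℝ, 0 ≤ c ∧ x = c • v}

/-- `r` is an extreme ray of `K`: `r` is a ray (for some `v ≠ 0`) and an extreme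
(face) subset of `K`. -/
def IsExtremeRay {V : Type*} [AddCommGroup V] [Module ℝ V] (K r : Set V) : Prop :=
  (∃ v : V, v ≠ 0 ∧ r = rayOf v) ∧ IsExtreme ℝ K r

section Aux
variable {V : Type*} [AddCommGroup V] [Module ℝ V]

lemma mem_coneHull {s : Set V} {x : V} (hx : x ∈ s) : x ∈ coneHull s :=
  ⟨1, fun _ => 1, fun _ => x, fun _ => zero_le_one, fun _ => hx, by simp⟩

lemma zero_mem_coneHull (s : Set V) : (0 : V) ∈ coneHull s :=
  ⟨0, Fin.elim0, Fin.elim0, fun i => i.elim0, fun i => i.elim0, by simp⟩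

lemma smul_mem_coneHull {s : Set V} {a : ℝ} (ha : 0 ≤ a) {x : V} (hx : x ∈ coneHull s) :
    a • x ∈ coneHull s := by
  obtain ⟨n, c, v, hc, hv, rfl⟩ := hx
  exact ⟨n, fun i => a * c i, v, fun i => mul_nonneg ha (hc i), hv, by
    rw [Finset.smul_sum]; simp [smul_smul]⟩

lemma add_mem_coneHull {s : Set V} {x y : V} (hx : x ∈ coneHull s) (hy : y ∈ coneHull s) :
    x + y ∈ coneHull s := by
  obtain ⟨n, c, v, hc, hv, rfl⟩ := hx
  obtain ⟨m, d, w, hd, hw, rfl⟩ := hy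
  refine ⟨n + m, Fin.append c d, Fin.append v w, ?_, ?_, ?_⟩
  · intro i
    refine Fin.addCases (fun j => ?_) (fun j => ?_) i <;> simp [hc, hd]
  · intro i
    refine Fin.addCases (fun j => ?_) (fun j => ?_) i <;> simp [hv, hw]
  · rw [Fin.sum_univ_add]; simp

lemma coneHull_min {s C : Set V} (hsub : s ⊆ C) (h0 : (0 : V) ∈ C)
    (hadd : ∀ x ∈ C, ∀ y ∈ C, x + y ∈ C)
    (hsmul : ∀ c : ℝ, 0 ≤ c → ∀ x ∈ C, c • x ∈ C) : coneHull s ⊆ C := by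
  rintro x ⟨n, c, v, hc, hv, rfl⟩
  exact Finset.sum_induction _ (· ∈ C) (fun a b ha hb => hadd a ha b hb) h0
    (fun i _ => hsmul _ (hc i) _ (hsub (hv i)))

lemma mem_coneHull_pair {a b x : V} :
    x ∈ coneHull ({a, b} : Set V) ↔ ∃ c d : ℝ, 0 ≤ c ∧ 0 ≤ d ∧ x = c • a + d • b := by
  constructor
  · intro hx
    refine coneHull_min (C := {x | ∃ c d : ℝ, 0 ≤ c ∧ 0 ≤ d ∧ x = c • a + d • b}) ?_ ?_ ?_ ?_ hx
    · rintro y (rfl | rfl)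
      · exact ⟨1, 0, zero_le_one, le_refl _, by simp⟩
      · exact ⟨0, 1, le_refl _, zero_le_one, by simp⟩
    · exact ⟨0, 0, le_refl _, le_refl _, by simp⟩
    · rintro - ⟨c₁, d₁, hc₁, hd₁, rfl⟩ - ⟨c₂, d₂, hc₂, hd₂, rfl⟩
      exact ⟨c₁ + c₂, d₁ + d₂, by positivity, by positivity, by module⟩
    · rintro e he - ⟨c₁, d₁, hc₁, hd₁, rfl⟩
      exact ⟨e * c₁, e * d₁, mul_nonneg he hc₁, mul_nonneg he hd₁, by module⟩
  · rintro ⟨c, d, hc, hd, rfl⟩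
    exact add_mem_coneHull (smul_mem_coneHull hc (mem_coneHull (by simp)))
      (smul_mem_coneHull hd (mem_coneHull (by simp)))

lemma self_mem_rayOf (v : V) : v ∈ rayOf v := ⟨1, zero_le_one, (one_smul ℝ v).symm⟩

lemma rayOf_smul {c : ℝ} (hc : 0 < c) (v : V) : rayOf (c • v) = rayOf v := by
  ext x
  constructor
  · rintro ⟨d, hd, rfl⟩
    exact ⟨d * c, mul_nonneg hd hc.le, smul_smul d c v⟩
  · rintro ⟨d, hd, rfl⟩
    exact ⟨d / c, div_nonneg hd hc.le, by rw [smul_smul, div_mul_cancel₀ _ hc.ne']⟩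

set_option linter.unusedSectionVars false in
lemma pointed_eq_zero {σ : Set V} (hpointed : σ ∩ (-σ) = {0}) {x : V}
    (hx : x ∈ σ) (hnx : -x ∈ σ) : x = 0 := by
  have : x ∈ σ ∩ (-σ) := ⟨hx, by simpa [Set.mem_neg] using hnx⟩
  rw [hpointed] at this; exact this

lemma zero_openSegment {σ : Set V} (hpointed : σ ∩ (-σ) = {0})
    (hsmul : ∀ c : ℝ, 0 ≤ c → ∀ x ∈ σ, c • x ∈ σ)
    {x₁ x₂ : V} (hx₁ : x₁ ∈ σ) (hx₂ : x₂ ∈ σ)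
    (h : (0 : V) ∈ openSegment ℝ x₁ x₂) : x₁ = 0 ∧ x₂ = 0 := by
  obtain ⟨a, b, ha, hb, hab, habx⟩ := h
  have h1 : -(a • x₁) = b • x₂ := by
    have := congrArg (fun z => z - a • x₁) habx
    simpa using this.symm
  have h2 : a • x₁ = 0 := pointed_eq_zero hpointed (hsmul a ha.le _ hx₁)
    (by rw [h1]; exact hsmul b hb.le _ hx₂)
  have hx1 : x₁ = 0 := by
    rcases smul_eq_zero.mp h2 with h | h
    · exact absurd h ha.ne'
    · exact h
  have hx2 : x₂ = 0 := by
    have : b • x₂ = 0 := by rw [← h1, h2, neg_zero]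
    rcases smul_eq_zero.mp this with h | h
    · exact absurd h hb.ne'
    · exact h
  exact ⟨hx1, hx2⟩

end Aux

section Main
variable {V : Type*} [AddCommGroup V] [Module ℝ V]

set_option maxHeartbeats 1000000 in
lemma hard_case {S : Finset V} {σ : Set V}
    (hσ : σ = coneHull (S : Set V)) (hpointed : σ ∩ (-σ) = {0})
    (φ : Module.Dual ℝ V) {v : V} (hv0 : v ≠ 0) (hvσ : v ∈ σ) (hφv : φ v = 0)
    (hext : IsExtreme ℝ (σ ∩ {x | 0 ≤ φ x}) (rayOf v))
    (hnot : ¬ IsExtreme ℝ σ (rayOf v)) :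
    ∃ e₁ e₂ : V, IsExtremeRay σ (rayOf e₁) ∧ IsExtremeRay σ (rayOf e₂) ∧
      φ e₁ < 0 ∧ 0 < φ e₂ ∧
      IsExtreme ℝ σ (coneHull ({e₁, e₂} : Set V)) ∧
      Module.finrank ℝ (Submodule.span ℝ ({e₁, e₂} : Set V)) = 2 ∧

      rayOf v = rayOf (φ e₂ • e₁ - φ e₁ • e₂) := by
  classical
  have hσsmul : ∀ c : ℝ, 0 ≤ c → ∀ x ∈ σ, c • x ∈ σ := by
    intro c hc x hx; rw [hσ] at hx ⊢; exact smul_mem_coneHull hc hx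
  have hσadd : ∀ x ∈ σ, ∀ y ∈ σ, x + y ∈ σ := by
    intro x hx y hy; rw [hσ] at hx hy ⊢; exact add_mem_coneHull hx hy
  set F : Set V := {x | x ∈ σ ∧ ∃ ε : ℝ, 0 < ε ∧ v - ε • x ∈ σ} with hFdef
  have hvF : v ∈ F := by
    refine ⟨hvσ, 1/2, by norm_num, ?_⟩
    have : v - (1/2 : ℝ) • v = (1/2 : ℝ) • v := by module
    rw [this]
    exact hσsmul _ (by norm_num) _ hvσ
  have hFsub : F ⊆ σ := fun x hx => hx.1
  have hFsmul : ∀ c : ℝ, 0 ≤ c → ∀ x ∈ F, c • x ∈ F := by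
    intro c hc x hx
    rcases eq_or_lt_of_le hc with h0 | hpos
    · rw [← h0, zero_smul]
      exact ⟨(hσ ▸ zero_mem_coneHull _ : (0:V) ∈ σ), 1, one_pos,
        by rw [one_smul, sub_zero]; exact hvσ⟩
    · obtain ⟨hxσ, ε, hε, hmem⟩ := hx
      refine ⟨hσsmul c hc _ hxσ, ε / c, div_pos hε hpos, ?_⟩
      have : (ε / c) • (c • x) = ε • x := by
        rw [smul_smul, div_mul_cancel₀ _ hpos.ne']
      rw [this]
      exact hmem
  have hmono : ∀ x ∈ σ, ∀ ε' ε : ℝ, 0 < ε' → ε' ≤ ε → v - ε • x ∈ σ → v - ε' • x ∈ σ := by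
    intro x hxσ ε' ε hε' hle hmem
    have hεpos : (0:ℝ) < ε := lt_of_lt_of_le hε' hle
    have heq : v - ε' • x = (ε'/ε) • (v - ε • x) + (1 - ε'/ε) • v := by
      have h1 : (ε'/ε) * ε = ε' := div_mul_cancel₀ _ hεpos.ne'
      match_scalars
      · ring
      · field_simp
    rw [heq]
    refine hσadd _ (hσsmul _ (by positivity) _ hmem) _ (hσsmul _ ?_ _ hvσ)
    have : ε'/ε ≤ 1 := by
      rw [div_le_one hεpos]; exact hle
    linarith
  have hFadd : ∀ x ∈ F, ∀ y ∈ F, x + y ∈ F := by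
    rintro x ⟨hxσ, εx, hεx, hmx⟩ y ⟨hyσ, εy, hεy, hmy⟩
    set ε := min εx εy with hεdef
    have hε : 0 < ε := lt_min hεx hεy
    have hmx' : v - ε • x ∈ σ := hmono x hxσ ε εx hε (min_le_left _ _) hmx
    have hmy' : v - ε • y ∈ σ := hmono y hyσ ε εy hε (min_le_right _ _) hmy
    refine ⟨hσadd _ hxσ _ hyσ, ε/2, by positivity, ?_⟩
    have heq : v - (ε/2) • (x + y) = (1/2 : ℝ) • (v - ε • x) + (1/2 : ℝ) • (v - ε • y) := by
      match_scalars <;> ring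
    rw [heq]
    exact hσadd _ (hσsmul _ (by norm_num) _ hmx') _ (hσsmul _ (by norm_num) _ hmy')
  have hFext : IsExtreme ℝ σ F := by
    refine ⟨hFsub, ?_⟩
    intro x₁ hx₁ x₂ hx₂ x hxF hseg
    obtain ⟨t, u, ht, hu, htu, hsum⟩ := hseg
    obtain ⟨hxσ, ε, hε, hmem⟩ := hxF
    suffices hboth : x₁ ∈ F ∧ x₂ ∈ F from hboth.1
    constructor
    · refine ⟨hx₁, ε * t, by positivity, ?_⟩
      have heq : v - (ε * t) • x₁ = (v - ε • x) + (ε * u) • x₂ := by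
        rw [← hsum]; match_scalars <;> ring
      rw [heq]
      exact hσadd _ hmem _ (hσsmul _ (by positivity) _ hx₂)
    · refine ⟨hx₂, ε * u, by positivity, ?_⟩
      have heq : v - (ε * u) • x₂ = (v - ε • x) + (ε * t) • x₁ := by
        rw [← hsum]; match_scalars <;> ring
      rw [heq]
      exact hσadd _ hmem _ (hσsmul _ (by positivity) _ hx₁)
  have hray_sub_F : rayOf v ⊆ F := by
    rintro x ⟨c, hc, rfl⟩
    exact hFsmul c hc v hvF
  have hrelint : ∀ x ∈ F, ∃ ε : ℝ, 0 < ε ∧ ε < 1 ∧ v - ε • x ∈ F := by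
    rintro x ⟨hxσ, ε, hε, hmem⟩
    set m : ℝ := min ε (1/2) with hmdef
    have hm0 : 0 < m := lt_min hε (by norm_num)
    have hm1 : m < 1 := lt_of_le_of_lt (min_le_right _ _) (by norm_num)
    have hmσ : v - m • x ∈ σ := hmono x hxσ m ε hm0 (min_le_left _ _) hmem
    refine ⟨m, hm0, hm1, hmσ, 1/2, by norm_num, ?_⟩
    have heq : v - (1/2 : ℝ) • (v - m • x) = (1/2 : ℝ) • v + (m/2) • x := by
      match_scalars <;> ring
    rw [heq]
    exact hσadd _ (hσsmul _ (by norm_num) _ hvσ) _ (hσsmul _ (by positivity) _ hxσ)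
  have hFH : ∀ x ∈ F, φ x = 0 → x ∈ rayOf v := by
    intro x hx hφx
    obtain ⟨ε, hε, hε1, hmem⟩ := hrelint x hx
    have hd : (0:ℝ) < 1 - ε := by linarith
    have hxK : x ∈ σ ∩ {y | 0 ≤ φ y} := ⟨hx.1, le_of_eq hφx.symm⟩
    set y : V := (1 - ε)⁻¹ • (v - ε • x) with hydef
    have hyF : y ∈ F := hFsmul _ (by positivity) _ hmem
    have hyK : y ∈ σ ∩ {z | 0 ≤ φ z} := by
      refine ⟨hFsub hyF, ?_⟩
      simp only [hydef, Set.mem_setOf_eq, map_smul, map_sub, smul_eq_mul, hφx, hφv,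
        mul_zero, sub_zero, le_refl]
    have hvseg : v ∈ openSegment ℝ x y := by
      refine ⟨ε, 1 - ε, hε, hd, by ring, ?_⟩
      rw [hydef, smul_smul, mul_inv_cancel₀ hd.ne', one_smul]
      module
    exact hext.2 hxK hyK (self_mem_rayOf v) hvseg
  have hnotsub : ¬ (F ⊆ rayOf v) := by
    intro hsub
    exact hnot ((Set.Subset.antisymm hray_sub_F hsub) ▸ hFext)
  have hneg_exists : ∃ p ∈ F, φ p < 0 := by
    by_contra h
    push_neg at h
    refine hnotsub (fun x hx => ?_)
    obtain ⟨ε, hε, hε1, hmem⟩ := hrelint x hx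
    have h1 : 0 ≤ φ (v - ε • x) := h _ hmem
    rw [map_sub, map_smul, smul_eq_mul, hφv] at h1
    have h2 : φ x ≤ 0 := by nlinarith
    exact hFH x hx (le_antisymm h2 (h x hx))
  have hpos_exists : ∃ q ∈ F, 0 < φ q := by
    by_contra h
    push_neg at h
    refine hnotsub (fun x hx => ?_)
    obtain ⟨ε, hε, hε1, hmem⟩ := hrelint x hx
    have h1 : φ (v - ε • x) ≤ 0 := h _ hmem
    rw [map_sub, map_smul, smul_eq_mul, hφv] at h1
    have h2 : 0 ≤ φ x := by nlinarith
    exact hFH x hx (le_antisymm (h x hx) h2)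
  have hFrep : ∀ x ∈ F, ∃ (n : ℕ) (c : Fin n → ℝ) (s : Fin n → V),
      (∀ i, 0 ≤ c i) ∧ (∀ i, s i ∈ (S : Set V)) ∧ (∀ i, c i ≠ 0 → s i ∈ F) ∧
      x = ∑ i, c i • s i := by
    intro x hx
    have hxσ : x ∈ coneHull (S : Set V) := hσ ▸ hx.1
    obtain ⟨n, c, s, hc, hs, hxeq⟩ := hxσ
    refine ⟨n, c, s, hc, hs, ?_, hxeq⟩
    intro i hci
    have hcip : 0 < c i := (hc i).lt_of_ne (Ne.symm hci)
    have hyσ : (∑ j ∈ Finset.univ.erase i, c j • s j) ∈ σ := by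
      rw [hσ]
      exact Finset.sum_induction _ (· ∈ coneHull (S : Set V))
        (fun a b ha hb => add_mem_coneHull ha hb) (zero_mem_coneHull _)
        (fun j _ => smul_mem_coneHull (hc j) (mem_coneHull (hs j)))
    have hsiσ : s i ∈ σ := hσ ▸ mem_coneHull (hs i)
    have hsplit : x = c i • s i + ∑ j ∈ Finset.univ.erase i, c j • s j := by
      rw [hxeq, ← Finset.add_sum_erase _ _ (Finset.mem_univ i)]
    have hseg : x ∈ openSegment ℝ ((2 * c i) • s i) ((2:ℝ) • ∑ j ∈ Finset.univ.erase i, c j • s j) := by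
      refine ⟨1/2, 1/2, by norm_num, by norm_num, by norm_num, ?_⟩
      rw [hsplit]
      match_scalars <;> ring
    have h2ci : (2 * c i) • s i ∈ F :=
      hFext.2 (hσsmul _ (by positivity) _ hsiσ) (hσsmul _ (by norm_num) _ hyσ) hx hseg
    have := hFsmul (2 * c i)⁻¹ (by positivity) _ h2ci
    rwa [smul_smul, inv_mul_cancel₀ (by positivity), one_smul] at this
  -- extract a positive generator s₀ ∈ S ∩ F
  have hgen : ∀ p ∈ F, φ p ≠ 0 → ∃ g, g ∈ (S : Set V) ∧ g ∈ F ∧ (0 < φ p → 0 < φ g) ∧ (φ p < 0 → φ g < 0) := by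
    intro p hp hφp
    obtain ⟨n, c, s, hc, hsS, hsF, hpe⟩ := hFrep p hp
    rcases lt_or_gt_of_ne hφp with hneg | hpos
    · have : ∃ i, c i * φ (s i) < 0 := by
        by_contra h
        push_neg at h
        have : 0 ≤ φ p := by
          rw [hpe, map_sum]
          apply Finset.sum_nonneg
          intro i _
          rw [map_smul, smul_eq_mul]
          rcases le_or_gt 0 (φ (s i)) with h' | h'
          · exact mul_nonneg (hc i) h'
          · nlinarith [h i, hc i]
        linarith
      obtain ⟨i, hi⟩ := this
      have hci : c i ≠ 0 := by
        intro h; rw [h, zero_mul] at hi; exact lt_irrefl 0 hi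
      have hφsi : φ (s i) < 0 := by nlinarith [hc i, (hc i).lt_of_ne (Ne.symm hci)]
      exact ⟨s i, hsS i, hsF i hci, fun h => absurd h (by linarith), fun _ => hφsi⟩
    · have : ∃ i, 0 < c i * φ (s i) := by
        by_contra h
        push_neg at h
        have : φ p ≤ 0 := by
          rw [hpe, map_sum]
          apply Finset.sum_nonpos
          intro i _
          rw [map_smul, smul_eq_mul]
          exact h i
        linarith
      obtain ⟨i, hi⟩ := this
      have hci : c i ≠ 0 := by
        intro h; rw [h, zero_mul] at hi; exact lt_irrefl 0 hi
      have hφsi : 0 < φ (s i) := by nlinarith [hc i, (hc i).lt_of_ne (Ne.symm hci)]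
      exact ⟨s i, hsS i, hsF i hci, fun _ => hφsi, fun h => absurd h (by linarith)⟩
  obtain ⟨q, hqF, hqpos⟩ := hpos_exists
  obtain ⟨s₀, hs₀S, hs₀F, hs₀p, -⟩ := hgen q hqF hqpos.ne'
  have hφs₀ : 0 < φ s₀ := hs₀p hqpos
  obtain ⟨p, hpF, hppos⟩ := hneg_exists
  obtain ⟨t₀, ht₀S, ht₀F, -, ht₀n⟩ := hgen p hpF hppos.ne
  have hφt₀ : φ t₀ < 0 := ht₀n hppos
  have hs₀σ : s₀ ∈ σ := hFsub hs₀F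
  -- coordinates for elements of F with negative φ
  have hAneg : ∀ x, x ∈ F → φ x < 0 → ∃ α : ℝ, 0 < α ∧ x = α • v + (φ x / φ s₀) • s₀ := by
    intro x hxF hφx
    have hwF : φ s₀ • x - φ x • s₀ ∈ F := by
      have h1 : φ s₀ • x ∈ F := hFsmul _ hφs₀.le _ hxF
      have h2 : (-φ x) • s₀ ∈ F := hFsmul _ (by linarith) _ hs₀F
      have := hFadd _ h1 _ h2
      rwa [neg_smul, ← sub_eq_add_neg] at this
    have hker : φ (φ s₀ • x - φ x • s₀) = 0 := by
      simp only [map_sub, map_smul, smul_eq_mul]; ring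
    obtain ⟨lam, hlam, hleq⟩ := hFH _ hwF hker
    have hlam0 : lam ≠ 0 := by
      intro h
      rw [h, zero_smul] at hleq
      rw [sub_eq_zero] at hleq
      have hxe : x = (φ x / φ s₀) • s₀ := by
        rw [div_eq_inv_mul, ← smul_smul, ← hleq, smul_smul, inv_mul_cancel₀ hφs₀.ne', one_smul]
      have hnx : -x ∈ σ := by
        rw [hxe, ← neg_smul]
        exact hσsmul _ (by have := div_neg_of_neg_of_pos hφx hφs₀; linarith) _ hs₀σ
      have : x = 0 := pointed_eq_zero hpointed hxF.1 hnx
      rw [this, map_zero] at hφx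
      exact lt_irrefl 0 hφx
    have hlampos : 0 < lam := hlam.lt_of_ne (Ne.symm hlam0)
    refine ⟨lam / φ s₀, div_pos hlampos hφs₀, ?_⟩
    have hxx : φ s₀ • x = lam • v + φ x • s₀ := by
      rw [← hleq]; abel
    calc x = (φ s₀)⁻¹ • (φ s₀ • x) := by
            rw [smul_smul, inv_mul_cancel₀ hφs₀.ne', one_smul]
      _ = (lam / φ s₀) • v + (φ x / φ s₀) • s₀ := by
            rw [hxx, smul_add, smul_smul, smul_smul]
            congr 1 <;> rw [div_eq_inv_mul]
  obtain ⟨a₀, ha₀, ht₀eq⟩ := hAneg t₀ ht₀F hφt₀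
  -- coordinates for all elements of F
  have hA' : ∀ x : V, ∃ α : ℝ, x ∈ F →
      (x = α • v + (φ x / φ s₀) • s₀ ∧ (φ x < 0 → 0 < α) ∧ (φ x = 0 → 0 ≤ α)) := by
    intro x
    by_cases hxF : x ∈ F
    swap
    · exact ⟨0, fun h => absurd h hxF⟩
    rcases lt_trichotomy (φ x) 0 with hneg | hzero | hpos
    · obtain ⟨α, hα, heq⟩ := hAneg x hxF hneg
      exact ⟨α, fun _ => ⟨heq, fun _ => hα, fun h => absurd h hneg.ne⟩⟩
    · obtain ⟨cx, hcx, hceq⟩ := hFH x hxF hzero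
      refine ⟨cx, fun _ => ⟨?_, fun h => absurd hzero h.ne, fun _ => hcx⟩⟩
      rw [hzero, zero_div, zero_smul, add_zero]
      exact hceq
    · -- use t₀
      have hwF : φ x • t₀ - φ t₀ • x ∈ F := by
        have h1 : φ x • t₀ ∈ F := hFsmul _ hpos.le _ ht₀F
        have h2 : (-φ t₀) • x ∈ F := hFsmul _ (by linarith) _ hxF
        have := hFadd _ h1 _ h2
        rwa [neg_smul, ← sub_eq_add_neg] at this
      have hker : φ (φ x • t₀ - φ t₀ • x) = 0 := by
        simp only [map_sub, map_smul, smul_eq_mul]; ring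
      obtain ⟨mu, hmu, hmueq⟩ := hFH _ hwF hker
      refine ⟨(φ x * a₀ - mu) / φ t₀, fun _ => ⟨?_, fun h => absurd hpos (by linarith),
        fun h => absurd h hpos.ne'⟩⟩
      have hxx : φ t₀ • x = φ x • t₀ - mu • v := by
        rw [← hmueq]; abel
      have hne : φ t₀ ≠ 0 := hφt₀.ne
      have hnes : φ s₀ ≠ 0 := hφs₀.ne'
      obtain ⟨ct, hct⟩ : ∃ c : ℝ, c = φ t₀ := ⟨_, rfl⟩
      obtain ⟨cs, hcs⟩ : ∃ c : ℝ, c = φ s₀ := ⟨_, rfl⟩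
      obtain ⟨cx, hcx⟩ : ∃ c : ℝ, c = φ x := ⟨_, rfl⟩
      rw [← hct, ← hcx] at hxx
      rw [← hct, ← hcs] at ht₀eq
      rw [← hct] at hne
      rw [← hcs] at hnes
      rw [← hct, ← hcs, ← hcx]
      calc x = ct⁻¹ • (ct • x) := by
              rw [smul_smul, inv_mul_cancel₀ hne, one_smul]
        _ = ((cx * a₀ - mu) / ct) • v + (cx / cs) • s₀ := by
              rw [hxx, ht₀eq]
              match_scalars
              · field_simp
              · field_simp
  choose A hA using hA'
  have hA1 : ∀ x, x ∈ F → x = A x • v + (φ x / φ s₀) • s₀ := fun x hx => ((hA x) hx).1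
  have hA2 : ∀ x, x ∈ F → φ x < 0 → 0 < A x := fun x hx h => ((hA x) hx).2.1 h
  have hA3 : ∀ x, x ∈ F → φ x = 0 → 0 ≤ A x := fun x hx h => ((hA x) hx).2.2 h
  set Tneg : Finset V := S.filter (fun x => x ∈ F ∧ φ x < 0) with hTneg
  set Tpos : Finset V := S.filter (fun x => x ∈ F ∧ 0 < φ x) with hTpos
  have hTnegne : Tneg.Nonempty :=
    ⟨t₀, by rw [hTneg, Finset.mem_filter]; exact ⟨Finset.mem_coe.mp ht₀S, ht₀F, hφt₀⟩⟩
  have hTposne : Tpos.Nonempty :=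
    ⟨s₀, by rw [hTpos, Finset.mem_filter]; exact ⟨Finset.mem_coe.mp hs₀S, hs₀F, hφs₀⟩⟩
  obtain ⟨e₁, he₁mem, he₁min⟩ := Finset.exists_min_image Tneg (fun x => A x / (-φ x)) hTnegne
  obtain ⟨e₂, he₂mem, he₂min⟩ := Finset.exists_min_image Tpos (fun x => A x / φ x) hTposne
  rw [hTneg, Finset.mem_filter] at he₁mem
  obtain ⟨he₁S, he₁F, hφe₁⟩ := he₁mem
  rw [hTpos, Finset.mem_filter] at he₂mem
  obtain ⟨he₂S, he₂F, hφe₂⟩ := he₂mem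
  have he₁σ : e₁ ∈ σ := hFsub he₁F
  have he₂σ : e₂ ∈ σ := hFsub he₂F
  have hne₁ : φ e₁ ≠ 0 := hφe₁.ne
  have hnes : φ s₀ ≠ 0 := hφs₀.ne'
  -- the vector w = φ(e₂)e₁ - φ(e₁)e₂ spans the same ray as v
  have hwF : φ e₂ • e₁ - φ e₁ • e₂ ∈ F := by
    have h1 : φ e₂ • e₁ ∈ F := hFsmul _ hφe₂.le _ he₁F
    have h2 : (-φ e₁) • e₂ ∈ F := hFsmul _ (by linarith) _ he₂F
    have := hFadd _ h1 _ h2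
    rwa [neg_smul, ← sub_eq_add_neg] at this
  have hker : φ (φ e₂ • e₁ - φ e₁ • e₂) = 0 := by
    simp only [map_sub, map_smul, smul_eq_mul]; ring
  obtain ⟨lam, hlam, hleq⟩ := hFH _ hwF hker
  have hlam0 : 0 < lam := by
    rcases eq_or_lt_of_le hlam with h0 | h
    swap
    · exact h
    exfalso
    rw [← h0, zero_smul, sub_eq_zero] at hleq
    have he₁e : e₁ = (φ e₁ / φ e₂) • e₂ := by
      rw [div_eq_inv_mul, ← smul_smul, ← hleq, smul_smul, inv_mul_cancel₀ hφe₂.ne', one_smul]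
    have hnege₁ : -e₁ ∈ σ := by
      rw [he₁e, ← neg_smul]
      exact hσsmul _ (by have := div_neg_of_neg_of_pos hφe₁ hφe₂; linarith) _ he₂σ
    have : e₁ = 0 := pointed_eq_zero hpointed he₁σ hnege₁
    rw [this, map_zero] at hφe₁
    exact lt_irrefl 0 hφe₁
  have hvray : rayOf v = rayOf (φ e₂ • e₁ - φ e₁ • e₂) := by
    rw [hleq, rayOf_smul hlam0]
  have hvpair : v = (φ e₂ / lam) • e₁ + (-φ e₁ / lam) • e₂ := by
    have h1 : lam⁻¹ • (φ e₂ • e₁ - φ e₁ • e₂) = v := by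
      rw [hleq, smul_smul, inv_mul_cancel₀ hlam0.ne', one_smul]
    rw [← h1]
    match_scalars <;> field_simp
  set P : Set V := {x | ∃ a b : ℝ, 0 ≤ a ∧ 0 ≤ b ∧ x = a • e₁ + b • e₂} with hPdef
  have hvP : v ∈ P :=
    ⟨φ e₂ / lam, -φ e₁ / lam, div_nonneg hφe₂.le hlam0.le,
      div_nonneg (by linarith) hlam0.le, hvpair⟩
  have hPsmul : ∀ c : ℝ, 0 ≤ c → ∀ x ∈ P, c • x ∈ P := by
    rintro c hc x ⟨a, b, ha, hb, rfl⟩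
    exact ⟨c * a, c * b, mul_nonneg hc ha, mul_nonneg hc hb, by module⟩
  have hPadd : ∀ x ∈ P, ∀ y ∈ P, x + y ∈ P := by
    rintro x ⟨a, b, ha, hb, rfl⟩ y ⟨a', b', ha', hb', rfl⟩
    exact ⟨a + a', b + b', by linarith, by linarith, by module⟩
  have hgenP : ∀ x, x ∈ (S : Set V) → x ∈ F → x ∈ P := by
    intro x hxS hxF
    rcases lt_trichotomy (φ x) 0 with hneg | hzero | hpos
    · have hxmem : x ∈ Tneg := by
        rw [hTneg, Finset.mem_filter]; exact ⟨Finset.mem_coe.mp hxS, hxF, hneg⟩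
      have hmin := he₁min x hxmem
      have hAe₁ : 0 < A e₁ := hA2 e₁ he₁F hφe₁
      rw [div_le_div_iff₀ (by linarith) (by linarith)] at hmin
      have hkey : 0 ≤ A x - (φ x / φ e₁) * A e₁ := by
        have h3 : (φ x / φ e₁) * A e₁ ≤ A x := by
          rw [div_mul_eq_mul_div, div_le_iff_of_neg hφe₁]
          nlinarith
        linarith
      have hxeq : x = (φ x / φ e₁) • e₁ + (A x - (φ x / φ e₁) * A e₁) • v := by
        calc x = A x • v + (φ x / φ s₀) • s₀ := hA1 x hxF
          _ = (φ x / φ e₁) • (A e₁ • v + (φ e₁ / φ s₀) • s₀)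
              + (A x - (φ x / φ e₁) * A e₁) • v := by
                match_scalars
                · ring
                · field_simp
          _ = (φ x / φ e₁) • e₁ + (A x - (φ x / φ e₁) * A e₁) • v := by
                rw [← hA1 e₁ he₁F]
      rw [hxeq]
      exact hPadd _ ⟨φ x / φ e₁, 0, by rw [div_nonneg_iff]; right; exact ⟨hneg.le, hφe₁.le⟩, le_rfl, by module⟩ _
        (hPsmul _ hkey _ hvP)
    · obtain ⟨cx, hcx, hceq⟩ := hFH x hxF hzero
      rw [hceq]
      exact hPsmul _ hcx _ hvP
    · have hxmem : x ∈ Tpos := by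
        rw [hTpos, Finset.mem_filter]; exact ⟨Finset.mem_coe.mp hxS, hxF, hpos⟩
      have hmin := he₂min x hxmem
      rw [div_le_div_iff₀ hφe₂ hpos] at hmin
      have hkey : 0 ≤ A x - (φ x / φ e₂) * A e₂ := by
        have h3 : (φ x / φ e₂) * A e₂ ≤ A x := by
          rw [div_mul_eq_mul_div, div_le_iff₀ hφe₂]
          nlinarith
        linarith
      have hxeq : x = (φ x / φ e₂) • e₂ + (A x - (φ x / φ e₂) * A e₂) • v := by
        calc x = A x • v + (φ x / φ s₀) • s₀ := hA1 x hxF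
          _ = (φ x / φ e₂) • (A e₂ • v + (φ e₂ / φ s₀) • s₀)
              + (A x - (φ x / φ e₂) * A e₂) • v := by
                match_scalars
                · ring
                · field_simp
          _ = (φ x / φ e₂) • e₂ + (A x - (φ x / φ e₂) * A e₂) • v := by
                rw [← hA1 e₂ he₂F]
      rw [hxeq]
      exact hPadd _ ⟨0, φ x / φ e₂, le_rfl, by positivity, by module⟩ _
        (hPsmul _ hkey _ hvP)
  have hFP : ∀ x ∈ F, x ∈ P := by
    intro x hx
    obtain ⟨n, c, s, hc, hsS, hsF, hxeq⟩ := hFrep x hx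
    rw [hxeq]
    refine Finset.sum_induction _ (· ∈ P) (fun a b ha hb => hPadd a ha b hb)
      ⟨0, 0, le_rfl, le_rfl, by module⟩ ?_
    intro i _
    rcases eq_or_ne (c i) 0 with h | h
    · rw [h, zero_smul]
      exact ⟨0, 0, le_rfl, le_rfl, by module⟩
    · exact hPsmul _ (hc i) _ (hgenP _ (hsS i) (hsF i h))
  have hPF : P ⊆ F := by
    rintro x ⟨a, b, ha, hb, rfl⟩
    exact hFadd _ (hFsmul a ha _ he₁F) _ (hFsmul b hb _ he₂F)
  have hPeqF : coneHull ({e₁, e₂} : Set V) = F := by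
    have hPcone : coneHull ({e₁, e₂} : Set V) = P :=
      Set.ext fun x => mem_coneHull_pair
    rw [hPcone]
    exact Set.Subset.antisymm hPF (fun x hx => hFP x hx)
  have hindep : ∀ c₁ c₂ : ℝ, c₁ • e₁ + c₂ • e₂ = 0 → c₁ = 0 ∧ c₂ = 0 := by
    intro c₁ c₂ hcc
    rcases eq_or_ne c₁ 0 with h1 | h1
    · refine ⟨h1, ?_⟩
      rw [h1, zero_smul, zero_add] at hcc
      rcases smul_eq_zero.mp hcc with h | h
      · exact h
      · exfalso; rw [h, map_zero] at hφe₂; exact lt_irrefl 0 hφe₂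
    · exfalso
      have h2 : c₁ • e₁ = (-c₂) • e₂ := by
        rw [add_eq_zero_iff_eq_neg] at hcc
        rw [hcc, neg_smul]
      have he₁e : e₁ = (-c₂ / c₁) • e₂ := by
        rw [div_eq_inv_mul, ← smul_smul, ← h2, smul_smul, inv_mul_cancel₀ h1, one_smul]
      have hratio : φ e₁ = (-c₂ / c₁) * φ e₂ := by
        rw [he₁e, map_smul, smul_eq_mul]
      have hrneg : -c₂ / c₁ < 0 := by
        rcases lt_trichotomy (-c₂ / c₁) 0 with h | h | h
        · exact h
        · exfalso; rw [h, zero_mul] at hratio; exact hne₁ hratio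
        · exfalso; nlinarith
      have hnege₁ : -e₁ ∈ σ := by
        rw [he₁e, ← neg_smul]
        exact hσsmul _ (by linarith) _ he₂σ
      have : e₁ = 0 := pointed_eq_zero hpointed he₁σ hnege₁
      rw [this, map_zero] at hφe₁
      exact lt_irrefl 0 hφe₁
  have hrayext₁ : IsExtreme ℝ F (rayOf e₁) := by
    refine ⟨?_, ?_⟩
    · rintro x ⟨c, hc, rfl⟩
      exact hFsmul c hc _ he₁F
    · intro x₁ hx₁ x₂ hx₂ x hx hseg
      obtain ⟨cc, hcc0, hcceq⟩ := hx
      obtain ⟨a₁, b₁, ha₁, hb₁, hx₁eq⟩ := hFP x₁ hx₁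
      obtain ⟨a₂, b₂, ha₂, hb₂, hx₂eq⟩ := hFP x₂ hx₂
      obtain ⟨t, u, ht, hu, htu, hsum⟩ := hseg
      have h0 : (t * a₁ + u * a₂ - cc) • e₁ + (t * b₁ + u * b₂) • e₂ = 0 := by
        have heq : (t * a₁ + u * a₂ - cc) • e₁ + (t * b₁ + u * b₂) • e₂
            = (t • x₁ + u • x₂) - cc • e₁ := by
          rw [hx₁eq, hx₂eq]; module
        rw [heq, hsum, ← hcceq, sub_self]
      obtain ⟨hA0, hB0⟩ := hindep _ _ h0
      have hb₁0 : b₁ = 0 := by nlinarith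
      have hb₂0 : b₂ = 0 := by nlinarith
      suffices hboth : x₁ ∈ rayOf e₁ ∧ x₂ ∈ rayOf e₁ from hboth.1
      constructor
      · exact ⟨a₁, ha₁, by rw [hx₁eq, hb₁0, zero_smul, add_zero]⟩
      · exact ⟨a₂, ha₂, by rw [hx₂eq, hb₂0, zero_smul, add_zero]⟩
  have hrayext₂ : IsExtreme ℝ F (rayOf e₂) := by
    refine ⟨?_, ?_⟩
    · rintro x ⟨c, hc, rfl⟩
      exact hFsmul c hc _ he₂F
    · intro x₁ hx₁ x₂ hx₂ x hx hseg
      obtain ⟨cc, hcc0, hcceq⟩ := hx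
      obtain ⟨a₁, b₁, ha₁, hb₁, hx₁eq⟩ := hFP x₁ hx₁
      obtain ⟨a₂, b₂, ha₂, hb₂, hx₂eq⟩ := hFP x₂ hx₂
      obtain ⟨t, u, ht, hu, htu, hsum⟩ := hseg
      have h0 : (t * a₁ + u * a₂) • e₁ + (t * b₁ + u * b₂ - cc) • e₂ = 0 := by
        have heq : (t * a₁ + u * a₂) • e₁ + (t * b₁ + u * b₂ - cc) • e₂
            = (t • x₁ + u • x₂) - cc • e₂ := by
          rw [hx₁eq, hx₂eq]; module
        rw [heq, hsum, ← hcceq, sub_self]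
      obtain ⟨hA0, hB0⟩ := hindep _ _ h0
      have ha₁0 : a₁ = 0 := by nlinarith
      have ha₂0 : a₂ = 0 := by nlinarith
      suffices hboth : x₁ ∈ rayOf e₂ ∧ x₂ ∈ rayOf e₂ from hboth.1
      constructor
      · exact ⟨b₁, hb₁, by rw [hx₁eq, ha₁0, zero_smul, zero_add]⟩
      · exact ⟨b₂, hb₂, by rw [hx₂eq, ha₂0, zero_smul, zero_add]⟩
  have hfinrank : Module.finrank ℝ (Submodule.span ℝ ({e₁, e₂} : Set V)) = 2 := by
    have hli : LinearIndependent ℝ ![e₁, e₂] :=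
      LinearIndependent.pair_iff.mpr fun s t hst => hindep s t hst
    have hr : Set.range ![e₁, e₂] = {e₁, e₂} := by
      ext x
      simp only [Set.mem_range, Fin.exists_fin_two, Set.mem_insert_iff, Set.mem_singleton_iff]
      constructor
      · rintro (h | h) <;> simp [h.symm]
      · rintro (h | h) <;> [exact Or.inl h.symm; exact Or.inr h.symm]
    have h2 := finrank_span_eq_card hli
    rw [hr] at h2
    simpa using h2
  refine ⟨e₁, e₂, ⟨⟨e₁, ?_, rfl⟩, IsExtreme.trans hFext hrayext₁⟩,
    ⟨⟨e₂, ?_, rfl⟩, IsExtreme.trans hFext hrayext₂⟩, hφe₁, hφe₂, ?_, hfinrank, hvray⟩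
  · intro h; rw [h, map_zero] at hφe₁; exact lt_irrefl 0 hφe₁
  · intro h; rw [h, map_zero] at hφe₂; exact lt_irrefl 0 hφe₂
  · rw [hPeqF]; exact hFext




end Main

/-- Let `V` be a finite-dimensional real vector space, `σ ⊆ V` a polyhedral convex cone
with `σ ∩ (-σ) = {0}`, and `φ ∈ V*` a nonzero linear functional. Then the extreme rays of
`σ ∩ {φ ≥ 0}` are exactly: (i) the extreme rays of `σ` contained in `{φ ≥ 0}`, together
with (ii) the rays `ℝ_{≥0}(φ(e₂)e₁ - φ(e₁)e₂)`, where `ℝ_{≥0}e₁`, `ℝ_{≥0}e₂` are extreme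
rays of `σ` with `φ(e₁) < 0 < φ(e₂)` such that `ℝ_{≥0}e₁ + ℝ_{≥0}e₂` is a two-dimensional
face of `σ`. -/
theorem stmt_7 {V : Type*} [AddCommGroup V] [Module ℝ V] [FiniteDimensional ℝ V]
    (S : Finset V) (σ : Set V) (hσ : σ = coneHull (S : Set V))
    (hpointed : σ ∩ (-σ) = {0})
    (φ : Module.Dual ℝ V) (hφ : φ ≠ 0) (r : Set V) :
    IsExtremeRay (σ ∩ {x | 0 ≤ φ x}) r ↔
      ((IsExtremeRay σ r ∧ r ⊆ {x | 0 ≤ φ x}) ∨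
        (∃ e₁ e₂ : V, IsExtremeRay σ (rayOf e₁) ∧ IsExtremeRay σ (rayOf e₂) ∧
          φ e₁ < 0 ∧ 0 < φ e₂ ∧
          IsExtreme ℝ σ (coneHull ({e₁, e₂} : Set V)) ∧
          Module.finrank ℝ (Submodule.span ℝ ({e₁, e₂} : Set V)) = 2 ∧
          r = rayOf (φ e₂ • e₁ - φ e₁ • e₂))) := by
  have hσsmul : ∀ c : ℝ, 0 ≤ c → ∀ x ∈ σ, c • x ∈ σ := by
    intro c hc x hx; rw [hσ] at hx ⊢; exact smul_mem_coneHull hc hx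
  have hσadd : ∀ x ∈ σ, ∀ y ∈ σ, x + y ∈ σ := by
    intro x hx y hy; rw [hσ] at hx hy ⊢; exact add_mem_coneHull hx hy
  constructor
  · rintro ⟨⟨v, hv0, rfl⟩, hext⟩
    obtain ⟨hvσ, hφv⟩ := hext.1 (self_mem_rayOf v)
    have hφv' : (0:ℝ) ≤ φ v := hφv
    rcases eq_or_lt_of_le hφv' with hzero | hpos
    · -- φ v = 0
      by_cases hray : IsExtreme ℝ σ (rayOf v)
      · left
        refine ⟨⟨⟨v, hv0, rfl⟩, hray⟩, ?_⟩
        rintro x ⟨c, hc, rfl⟩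
        simp only [Set.mem_setOf_eq, map_smul, smul_eq_mul, ← hzero, mul_zero, le_refl]
      · right
        exact hard_case hσ hpointed φ hv0 hvσ hzero.symm hext hray
    · -- 0 < φ v : extreme ray of σ
      left
      have key : ∀ x₁ ∈ σ, ∀ x₂ ∈ σ, ∀ z ∈ σ, z ∈ rayOf v → 0 < φ z →
          z ∈ openSegment ℝ x₁ x₂ → 0 ≤ φ x₁ := by
        intro x₁ hx₁ x₂ hx₂ z hzσ hzr hφz hseg
        by_contra hneg
        push_neg at hneg
        obtain ⟨t, u, ht, hu, htu, hsum⟩ := hseg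
        obtain rfl : u = 1 - t := by linarith
        have hφx₂ : 0 < φ x₂ := by
          have h1 : t * φ x₁ + (1 - t) * φ x₂ = φ z := by
            rw [← hsum]; simp
          nlinarith
        have hden : 0 < φ z - φ x₁ := by linarith
        set s : ℝ := φ z / (φ z - φ x₁) with hs
        have hs0 : 0 < s := div_pos hφz hden
        have hs1 : s < 1 := by
          rw [hs, div_lt_one hden]; linarith
        set x₁' : V := s • x₁ + (1 - s) • z with hx₁'
        have hφx₁' : φ x₁' = 0 := by
          simp only [hx₁', map_add, map_smul, smul_eq_mul, hs]
          field_simp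
          ring
        have hx₁'σ : x₁' ∈ σ := hσadd _ (hσsmul s hs0.le _ hx₁) _
          (hσsmul (1 - s) (by linarith) _ hzσ)
        -- z lies in the open segment between x₁' and x₂
        have hA : (0:ℝ) < t / s := div_pos ht hs0
        have hABpos : (0:ℝ) < t / s + (1 - t) := by positivity
        have hcomb : (t/s) • x₁' + (1 - t) • x₂ = (t/s + (1 - t)) • z := by
          rw [hx₁', ← hsum]
          match_scalars <;> field_simp <;> ring
        have hseg' : z ∈ openSegment ℝ x₁' x₂ := by
          refine ⟨(t/s + (1 - t))⁻¹ * (t/s), (t/s + (1 - t))⁻¹ * (1 - t),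
            by positivity, by positivity, ?_, ?_⟩
          · field_simp
          · rw [mul_smul, mul_smul, ← smul_add, hcomb, smul_smul,
              inv_mul_cancel₀ hABpos.ne', one_smul]
        have hx₁'r : x₁' ∈ rayOf v :=
          hext.2 ⟨hx₁'σ, le_of_eq hφx₁'.symm⟩ ⟨hx₂, hφx₂.le⟩ hzr hseg'
        obtain ⟨c', hc', hc'eq⟩ := hx₁'r
        have hc'0 : c' = 0 := by
          have : c' * φ v = 0 := by
            rw [← smul_eq_mul, ← map_smul, ← hc'eq, hφx₁']
          rcases mul_eq_zero.mp this with h | h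
          · exact h
          · exact absurd h hpos.ne'
        have hx₁'0 : x₁' = 0 := by rw [hc'eq, hc'0, zero_smul]
        have hz0 : z = 0 := by
          have h0seg : (0:V) ∈ openSegment ℝ x₁ z :=
            ⟨s, 1 - s, hs0, by linarith, by ring, by rw [← hx₁', hx₁'0]⟩
          exact (zero_openSegment hpointed hσsmul hx₁ hzσ h0seg).2
        rw [hz0, map_zero] at hφz
        exact lt_irrefl 0 hφz
      refine ⟨⟨⟨v, hv0, rfl⟩, ?_, ?_⟩, ?_⟩
      · rintro x ⟨c, hc, rfl⟩
        exact hσsmul c hc _ hvσ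
      · intro x₁ hx₁ x₂ hx₂ z hz hseg
        suffices hboth : x₁ ∈ rayOf v ∧ x₂ ∈ rayOf v from hboth.1
        obtain ⟨c, hc, hceq⟩ := hz
        rcases eq_or_lt_of_le hc with hc0 | hcpos
        · have hz0 : z = 0 := by rw [hceq, ← hc0, zero_smul]
          rw [hz0] at hseg
          obtain ⟨h1, h2⟩ := zero_openSegment hpointed hσsmul hx₁ hx₂ hseg
          exact ⟨⟨0, le_refl 0, by rw [h1, zero_smul]⟩, ⟨0, le_refl 0, by rw [h2, zero_smul]⟩⟩
        · have hzσ : z ∈ σ := by rw [hceq]; exact hσsmul c hc _ hvσ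
          have hφz : 0 < φ z := by
            rw [hceq, map_smul, smul_eq_mul]
            exact mul_pos hcpos hpos
          have hφx₁ : 0 ≤ φ x₁ := key x₁ hx₁ x₂ hx₂ z hzσ ⟨c, hc, hceq⟩ hφz hseg
          have hφx₂ : 0 ≤ φ x₂ := key x₂ hx₂ x₁ hx₁ z hzσ ⟨c, hc, hceq⟩ hφz
            (by rwa [openSegment_symm])
          exact ⟨hext.2 ⟨hx₁, hφx₁⟩ ⟨hx₂, hφx₂⟩ ⟨c, hc, hceq⟩ hseg,
            hext.right_mem_of_mem_openSegment ⟨hx₁, hφx₁⟩ ⟨hx₂, hφx₂⟩ ⟨c, hc, hceq⟩ hseg⟩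
      · rintro x ⟨c, hc, rfl⟩
        simp only [Set.mem_setOf_eq, map_smul, smul_eq_mul]
        positivity
  · rintro (⟨⟨⟨v, hv0, rfl⟩, hextσ⟩, hsub⟩ | ⟨e₁, e₂, h₁, h₂, hφ₁, hφ₂, hF, hrank, rfl⟩)
    · refine ⟨⟨v, hv0, rfl⟩, ?_, ?_⟩
      · intro x hx
        exact ⟨hextσ.1 hx, hsub hx⟩
      · intro x₁ hx₁ x₂ hx₂ x hx hseg
        exact hextσ.2 hx₁.1 hx₂.1 hx hseg
    · set w : V := φ e₂ • e₁ - φ e₁ • e₂ with hw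
      have hwker : φ w = 0 := by
        simp only [hw, map_sub, map_smul, smul_eq_mul]
        ring
      have hwpair : w ∈ coneHull ({e₁, e₂} : Set V) :=
        mem_coneHull_pair.mpr ⟨φ e₂, -φ e₁, hφ₂.le, by linarith, by module⟩
      have hpairσ : coneHull ({e₁, e₂} : Set V) ⊆ σ := hF.1
      have hwσ : w ∈ σ := hpairσ hwpair
      have he₂0 : e₂ ≠ 0 := by
        intro h; rw [h, map_zero] at hφ₂; exact lt_irrefl 0 hφ₂
      have hw0 : w ≠ 0 := by
        intro h
        have he₁ : e₁ = (φ e₂)⁻¹ • (φ e₁ • e₂) := by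
          have : φ e₂ • e₁ = φ e₁ • e₂ := by
            rw [← sub_eq_zero]; exact h
          rw [← this, smul_smul, inv_mul_cancel₀ hφ₂.ne', one_smul]
        have hsp : Submodule.span ℝ ({e₁, e₂} : Set V) ≤ Submodule.span ℝ ({e₂} : Set V) := by
          rw [Submodule.span_le]
          intro x hx
          simp only [Set.mem_insert_iff, Set.mem_singleton_iff] at hx
          rcases hx with h | h
          · rw [h, he₁]
            exact Submodule.smul_mem _ _ (Submodule.smul_mem _ _ (Submodule.mem_span_singleton_self e₂))
          · rw [h]
            exact Submodule.mem_span_singleton_self e₂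
        have h1 : Module.finrank ℝ (Submodule.span ℝ ({e₂} : Set V)) = 1 :=
          finrank_span_singleton he₂0
        have := Submodule.finrank_mono hsp
        rw [hrank, h1] at this
        omega
      refine ⟨⟨w, hw0, rfl⟩, ?_, ?_⟩
      · rintro x ⟨c, hc, rfl⟩
        refine ⟨hσsmul c hc _ hwσ, ?_⟩
        simp only [Set.mem_setOf_eq, map_smul, smul_eq_mul, hwker, mul_zero, le_refl]
      · intro x₁ hx₁ x₂ hx₂ z hz hseg
        suffices hboth : x₁ ∈ rayOf w ∧ x₂ ∈ rayOf w from hboth.1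
        obtain ⟨c, hc, hceq⟩ := hz
        rcases eq_or_lt_of_le hc with hc0 | hcpos
        · have hz0 : z = 0 := by rw [hceq, ← hc0, zero_smul]
          rw [hz0] at hseg
          obtain ⟨h1, h2⟩ := zero_openSegment hpointed hσsmul hx₁.1 hx₂.1 hseg
          exact ⟨⟨0, le_refl 0, by rw [h1, zero_smul]⟩, ⟨0, le_refl 0, by rw [h2, zero_smul]⟩⟩
        · have hzpair : z ∈ coneHull ({e₁, e₂} : Set V) := by
            rw [hceq]; exact smul_mem_coneHull hc hwpair
          have hx₁p := hF.2 hx₁.1 hx₂.1 hzpair hseg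
          have hx₂p := hF.right_mem_of_mem_openSegment hx₁.1 hx₂.1 hzpair hseg
          -- φ vanishes on x₁ and x₂
          obtain ⟨t, u, ht, hu, htu, hsum⟩ := hseg
          have hφz : φ z = 0 := by rw [hceq, map_smul, smul_eq_mul, hwker, mul_zero]
          have hφx₁0 : (0:ℝ) ≤ φ x₁ := hx₁.2
          have hφx₂0 : (0:ℝ) ≤ φ x₂ := hx₂.2
          have hsumφ : t * φ x₁ + u * φ x₂ = 0 := by
            rw [← hφz, ← hsum]; simp
          have hφx₁ : φ x₁ = 0 := by nlinarith
          have hφx₂ : φ x₂ = 0 := by nlinarith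
          obtain ⟨a₁, b₁, ha₁, hb₁, hx₁eq⟩ := mem_coneHull_pair.mp hx₁p
          obtain ⟨a₂, b₂, ha₂, hb₂, hx₂eq⟩ := mem_coneHull_pair.mp hx₂p
          have key : ∀ a b : ℝ, 0 ≤ a → 0 ≤ b → ∀ x : V, x = a • e₁ + b • e₂ → φ x = 0 →
              x ∈ rayOf w := by
            intro a b ha hb x hxeq hφx
            have hab : a * φ e₁ + b * φ e₂ = 0 := by
              rw [← hφx, hxeq]; simp
            have hne : φ e₁ ≠ 0 := hφ₁.ne
            have hne' : -φ e₁ ≠ 0 := neg_ne_zero.mpr hne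
            have haval : b / (-φ e₁) * φ e₂ = a := by
              rw [div_mul_eq_mul_div, div_eq_iff hne']
              linear_combination hab
            have hbval : b / (-φ e₁) * φ e₁ = -b := by
              rw [div_mul_eq_mul_div, div_eq_iff hne']
              ring
            refine ⟨b / (-φ e₁), div_nonneg hb (by linarith), ?_⟩
            rw [hxeq, hw, smul_sub, smul_smul, smul_smul, haval, hbval, neg_smul,
              sub_neg_eq_add]
          exact ⟨key a₁ b₁ ha₁ hb₁ x₁ hx₁eq hφx₁, key a₂ b₂ ha₂ hb₂ x₂ hx₂eq hφx₂⟩
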